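/- Let H0 be a self-adjoint operator and B a symmetric perturbation with D(H0) ⊆ D(B) such that H = H0 + B is self-adjoint on D(H0). Assume: (i) ⟨H0 f, B g⟩ = ⟨B f, H0 g⟩ for all f, g ∈ D^∞(H0); (ii) H is essentially self-adjoint on D^∞(H0); (iii) ‖H0 f‖ ≤ ‖H f‖ for all f ∈ D^∞(H0). Then D^∞(H0) = D^∞(H). -/
import Mathlib


open scoped ComplexInnerProductSpace

namespace Paper

/-- An unbounded linear operator in a Hilbert space `𝓗`, encoded by a distinguished
domain together with a globally defined linear extension of its action. -/
structure Op (𝓗 : Type*) [NormedAddCommGroup 𝓗] [InnerProductSpace ℂ 𝓗] where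
  dom : Submodule ℂ 𝓗
  op : 𝓗 →ₗ[ℂ] 𝓗

variable {𝓗 : Type*} [NormedAddCommGroup 𝓗] [InnerProductSpace ℂ 𝓗]

namespace Op

/-- `T.pw k` is the `k`-th power `T^k` of `T`, as a function. -/
def pw (T : Op 𝓗) (k : ℕ) : 𝓗 → 𝓗 := (fun x => T.op x)^[k]

/-- The domain `D(Tⁿ)` of the `n`-th power of `T`. -/
def domPow (T : Op 𝓗) : ℕ → Set 𝓗
  | 0 => Set.univ
  | n + 1 => {x | x ∈ T.dom ∧ T.op x ∈ T.domPow n}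

/-- The set of C^∞-vectors `D^∞(T) = ⋂ₙ D(Tⁿ)`. -/
def Dinf (T : Op 𝓗) : Set 𝓗 := ⋂ n : ℕ, T.domPow n

/-- `T` is symmetric. -/
def Symmetric (T : Op 𝓗) : Prop :=
  ∀ x ∈ T.dom, ∀ y ∈ T.dom, ⟪T.op x, y⟫ = ⟪x, T.op y⟫

/-- Self-adjointness: densely defined, symmetric, and every vector in the domain of the
adjoint already belongs to the domain (on which the adjoint acts as the operator). -/
def IsSelfAdjoint (T : Op 𝓗) : Prop :=
  Dense (T.dom : Set 𝓗) ∧ T.Symmetric ∧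
    ∀ y z : 𝓗, (∀ x ∈ T.dom, ⟪T.op x, y⟫ = ⟪x, z⟫) → y ∈ T.dom ∧ T.op y = z

/-- `T ≥ 1`. -/
def GeOne (T : Op 𝓗) : Prop := ∀ x ∈ T.dom, ‖x‖ ^ 2 ≤ (⟪T.op x, x⟫).re

/-- The perturbed operator `T + B`, with domain `D(T)`. -/
def pert (T B : Op 𝓗) : Op 𝓗 := ⟨T.dom, T.op + B.op⟩

/-- The graph topology `t_T` on a subset `D`, generated by the seminorms `φ ↦ ‖Tⁿφ‖`,
i.e. the initial topology for the maps `φ ↦ Tⁿφ`. -/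
def graphTopOn (T : Op 𝓗) (D : Set 𝓗) : TopologicalSpace D :=
  ⨅ n : ℕ, TopologicalSpace.induced (fun φ : D => T.pw n ↑φ) inferInstance

end Op

/-- `D0` is a core for the `k`-th power of `T`. -/
def IsCorePow (T : Op 𝓗) (k : ℕ) (D0 : Set 𝓗) : Prop :=
  D0 ⊆ T.domPow k ∧ ∀ x ∈ T.domPow k, ∃ u : ℕ → 𝓗, (∀ n, u n ∈ D0) ∧
    Filter.Tendsto u Filter.atTop (nhds x) ∧
    Filter.Tendsto (fun n => T.pw k (u n)) Filter.atTop (nhds (T.pw k x))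

/-- Membership in the O*-algebra `L†(D)`: `A` maps `D` into `D`, `D ⊆ D(A*)` and
`A* D ⊆ D` (witnessed by `Adag`). -/
def MemLdag (D : Set 𝓗) (A : 𝓗 →ₗ[ℂ] 𝓗) : Prop :=
  (∀ x ∈ D, A x ∈ D) ∧
    ∃ Adag : 𝓗 →ₗ[ℂ] 𝓗, (∀ x ∈ D, Adag x ∈ D) ∧
      ∀ x ∈ D, ∀ y ∈ D, ⟪A x, y⟫ = ⟪x, Adag y⟫

/-- The operator norm of (the bounded extension of) `A`, computed on the unit ball of `D`. -/
noncomputable def opNormOn (D : Set 𝓗) (A : 𝓗 → 𝓗) : ℝ :=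
  ⨆ φ : {ψ : 𝓗 // ψ ∈ D ∧ ‖ψ‖ ≤ 1}, ‖A ↑φ‖

/-- The class `F` of positive, bounded, continuous functions on `[0,∞)` which decrease
faster than any inverse power of `x`. -/
def IsInF (f : ℝ → ℝ) : Prop :=
  Continuous f ∧ (∀ x : ℝ, 0 ≤ x → 0 < f x) ∧
    ∀ k : ℕ, ∃ M : ℝ, ∀ x : ℝ, 0 ≤ x → x ^ k * f x ≤ M

/-- The bounded measurable functional calculus of a self-adjoint operator `T` whose
spectrum is contained in `[a, ∞)`. -/
structure FnCalc (T : Op 𝓗) (a : ℝ) where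
  Φ : (ℝ → ℝ) → (𝓗 →L[ℂ] 𝓗)
  Φ_one : Φ (fun _ => 1) = 1
  Φ_add : ∀ f g : ℝ → ℝ, Measurable f → Measurable g →
    Φ (fun t => f t + g t) = Φ f + Φ g
  Φ_mul : ∀ f g : ℝ → ℝ, Measurable f → Measurable g →
    Φ (fun t => f t * g t) = (Φ f).comp (Φ g)
  Φ_symm : ∀ (f : ℝ → ℝ) (x y : 𝓗), ⟪Φ f x, y⟫ = ⟪x, Φ f y⟫
  Φ_norm : ∀ (f : ℝ → ℝ) (M : ℝ), (∀ t : ℝ, a ≤ t → |f t| ≤ M) →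
    ∀ x : 𝓗, ‖Φ f x‖ ≤ M * ‖x‖
  Φ_supp : ∀ f : ℝ → ℝ, Measurable f → (∀ t : ℝ, a ≤ t → f t = 0) → Φ f = 0
  Φ_pos : ∀ f : ℝ → ℝ, Measurable f → (∀ t : ℝ, a ≤ t → 0 ≤ f t) →
    ∀ x : 𝓗, 0 ≤ (⟪Φ f x, x⟫).re
  Φ_dom : ∀ f : ℝ → ℝ, Measurable f → (∃ M : ℝ, ∀ t : ℝ, a ≤ t → |t * f t| ≤ M) →
    ∀ x : 𝓗, Φ f x ∈ T.dom ∧ T.op (Φ f x) = Φ (fun t => t * f t) x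
  Q_tendsto : ∀ x : 𝓗, Filter.Tendsto
    (fun L : ℝ => Φ (Set.indicator (Set.Icc a L) fun _ => (1 : ℝ)) x)
    Filter.atTop (nhds x)

/-- The spectral projection `Q_L = E([a, L])` of `T`. -/
noncomputable def FnCalc.Q {T : Op 𝓗} {a : ℝ} (c : FnCalc T a) (L : ℝ) : 𝓗 →L[ℂ] 𝓗 :=
  c.Φ (Set.indicator (Set.Icc a L) fun _ => (1 : ℝ))

/-- The seminorm `A ↦ max{‖Tᵏ A f(T)‖, ‖f(T) A Tᵏ‖}` of the quasi-uniform topology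
`τ_*` on `L†(D)`. -/
noncomputable def qseminorm {T : Op 𝓗} {a : ℝ} (c : FnCalc T a) (D : Set 𝓗)
    (f : ℝ → ℝ) (k : ℕ) (A : 𝓗 →ₗ[ℂ] 𝓗) : ℝ :=
  max (opNormOn D fun φ => T.pw k (A (c.Φ f φ)))
      (opNormOn D fun φ => c.Φ f (A (T.pw k φ)))

/-- `i[A,T] = i(A T - T A)`, as a function. -/
noncomputable def commI (A T : 𝓗 → 𝓗) : 𝓗 → 𝓗 :=
  fun φ => Complex.I • (A (T φ) - T (A φ))

/-- Iterated commutators: `itComm A B j = [A, B]_j`, with `[A,B]_0 = B` and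
`[A,B]_{j+1} = [A, [A,B]_j]`. -/
def itComm (A B : 𝓗 → 𝓗) : ℕ → (𝓗 → 𝓗)
  | 0 => B
  | j + 1 => fun φ => A (itComm A B j φ) - itComm A B j (A φ)


lemma aux_domPow_sub (T : Op 𝓗) :
    ∀ n : ℕ, ∀ x ∈ T.domPow n, ∀ y ∈ T.domPow n, x - y ∈ T.domPow n
  | 0, _, _, _, _ => trivial
  | n+1, x, hx, y, hy => ⟨Submodule.sub_mem _ hx.1 hy.1, by
      have := aux_domPow_sub T n _ hx.2 _ hy.2
      simpa [map_sub] using this⟩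

lemma aux_Dinf_sub (T : Op 𝓗) {x y : 𝓗} (hx : x ∈ T.Dinf) (hy : y ∈ T.Dinf) :
    x - y ∈ T.Dinf := by
  rw [Op.Dinf, Set.mem_iInter] at *
  exact fun n => aux_domPow_sub T n x (hx n) y (hy n)

lemma aux_closed {T : Op 𝓗} (hsa : T.IsSelfAdjoint) {u : ℕ → 𝓗} {x z : 𝓗}
    (hu : ∀ n, u n ∈ T.dom)
    (h1 : Filter.Tendsto u Filter.atTop (nhds x))
    (h2 : Filter.Tendsto (fun n => T.op (u n)) Filter.atTop (nhds z)) :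
    x ∈ T.dom ∧ T.op x = z := by
  refine hsa.2.2 x z fun w hw => ?_
  have l1 : Filter.Tendsto (fun n => ⟪T.op w, u n⟫) Filter.atTop (nhds ⟪T.op w, x⟫) :=
    Filter.Tendsto.inner tendsto_const_nhds h1
  have l2 : Filter.Tendsto (fun n => ⟪w, T.op (u n)⟫) Filter.atTop (nhds ⟪w, z⟫) :=
    Filter.Tendsto.inner tendsto_const_nhds h2
  have heq : ∀ n, ⟪T.op w, u n⟫ = ⟪w, T.op (u n)⟫ := fun n => hsa.2.1 w hw (u n) (hu n)
  exact tendsto_nhds_unique (by simpa only [heq] using l1) l2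


variable {𝓗 : Type*} [NormedAddCommGroup 𝓗] [InnerProductSpace ℂ 𝓗] [CompleteSpace 𝓗]

/-- (Corollary) If (i) `⟨H0 f, B g⟩ = ⟨B f, H0 g⟩` for all
`f, g ∈ D^∞(H0)`, (ii) `H` is essentially self-adjoint on `D^∞(H0)`, and (iii)
`‖H0 f‖ ≤ ‖H f‖` for all `f ∈ D^∞(H0)`, then `D^∞(H0) = D^∞(H)`. -/
theorem stmt12 (H0 B : Op 𝓗) (hsa0 : H0.IsSelfAdjoint)
    (hBsymm : B.Symmetric) (hdomB : (H0.dom : Set 𝓗) ⊆ B.dom)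
    (hsaH : (H0.pert B).IsSelfAdjoint)
    (hcomm : ∀ f ∈ H0.Dinf, ∀ g ∈ H0.Dinf, ⟪H0.op f, B.op g⟫ = ⟪B.op f, H0.op g⟫)
    (hess : IsCorePow (H0.pert B) 1 H0.Dinf)
    (hbound : ∀ f ∈ H0.Dinf, ‖H0.op f‖ ≤ ‖(H0.pert B).op f‖) :
    H0.Dinf = (H0.pert B).Dinf := by
  set H : Op 𝓗 := H0.pert B with hHdef
  have hHop : ∀ x : 𝓗, H.op x = H0.op x + B.op x := fun x => rfl
  have hDsub : ∀ x ∈ H0.Dinf, x ∈ H0.dom := by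
    intro x hx
    rw [Op.Dinf, Set.mem_iInter] at hx
    exact (hx 1).1
  have hDinv : ∀ x ∈ H0.Dinf, H0.op x ∈ H0.Dinf := by
    intro x hx
    rw [Op.Dinf, Set.mem_iInter] at hx ⊢
    exact fun n => (hx (n + 1)).2
  -- Step 1: every x ∈ D(H0) is approximable from D^∞(H0) in the joint graph sense
  have approx : ∀ x ∈ H0.dom, ∃ u : ℕ → 𝓗, (∀ n, u n ∈ H0.Dinf) ∧
      Filter.Tendsto u Filter.atTop (nhds x) ∧
      Filter.Tendsto (fun n => H.op (u n)) Filter.atTop (nhds (H.op x)) ∧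
      Filter.Tendsto (fun n => H0.op (u n)) Filter.atTop (nhds (H0.op x)) := by
    intro x hx
    obtain ⟨u, hu, hux, huH⟩ := hess.2 x ⟨hx, Set.mem_univ _⟩
    have hpw : H.pw 1 = fun y => H.op y := by
      funext y; simp [Op.pw]
    rw [hpw] at huH
    have cH : CauchySeq (fun n => H.op (u n)) := huH.cauchySeq
    have cH0 : CauchySeq (fun n => H0.op (u n)) := by
      rw [Metric.cauchySeq_iff] at cH ⊢
      intro ε hε
      obtain ⟨N, hN⟩ := cH ε hε
      refine ⟨N, fun m hm n hn => lt_of_le_of_lt ?_ (hN m hm n hn)⟩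
      have hmem := aux_Dinf_sub H0 (hu m) (hu n)
      calc dist (H0.op (u m)) (H0.op (u n)) = ‖H0.op (u m - u n)‖ := by
            rw [dist_eq_norm, map_sub]
        _ ≤ ‖H.op (u m - u n)‖ := hbound _ hmem
        _ = dist (H.op (u m)) (H.op (u n)) := by rw [dist_eq_norm, map_sub]
    obtain ⟨w, hw⟩ := cauchySeq_tendsto_of_complete cH0
    have hcl := aux_closed hsa0 (fun n => hDsub _ (hu n)) hux hw
    exact ⟨u, hu, hux, huH, hcl.2 ▸ hw⟩
  -- Step 2: weak commutation on D^∞(H0)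
  have I1a : ∀ g ∈ H0.Dinf, ∀ x ∈ H0.Dinf, ⟪H.op g, H0.op x⟫ = ⟪H0.op g, H.op x⟫ := by
    intro g hg x hx
    rw [hHop, hHop, inner_add_left, inner_add_right, hcomm g hg x hx]
  have I1 : ∀ g ∈ H0.Dinf, ∀ x ∈ H0.dom, ⟪H.op g, H0.op x⟫ = ⟪H0.op g, H.op x⟫ := by
    intro g hg x hx
    obtain ⟨u, hu, _, h2, h3⟩ := approx x hx
    have l1 : Filter.Tendsto (fun n => ⟪H.op g, H0.op (u n)⟫) Filter.atTop
        (nhds ⟪H.op g, H0.op x⟫) := Filter.Tendsto.inner tendsto_const_nhds h3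
    have l2 : Filter.Tendsto (fun n => ⟪H0.op g, H.op (u n)⟫) Filter.atTop
        (nhds ⟪H0.op g, H.op x⟫) := Filter.Tendsto.inner tendsto_const_nhds h2
    have heq : ∀ n, ⟪H.op g, H0.op (u n)⟫ = ⟪H0.op g, H.op (u n)⟫ :=
      fun n => I1a g hg (u n) (hu n)
    exact tendsto_nhds_unique (by simpa only [heq] using l1) l2
  -- Step 3: commutation lemmas via self-adjointness
  have lemA : ∀ x, x ∈ H0.dom → H.op x ∈ H0.dom →
      H0.op x ∈ H0.dom ∧ H.op (H0.op x) = H0.op (H.op x) := by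
    intro x hx hHx
    refine hsaH.2.2 (H0.op x) (H0.op (H.op x)) ?_
    intro y hy
    obtain ⟨g, hg, hgy, hgH, _⟩ := approx y hy
    have heq : ∀ m, ⟪H.op (g m), H0.op x⟫ = ⟪g m, H0.op (H.op x)⟫ := by
      intro m
      rw [I1 (g m) (hg m) x hx]
      exact hsa0.2.1 (g m) (hDsub _ (hg m)) (H.op x) hHx
    have l1 : Filter.Tendsto (fun m => ⟪H.op (g m), H0.op x⟫) Filter.atTop
        (nhds ⟪H.op y, H0.op x⟫) := Filter.Tendsto.inner hgH tendsto_const_nhds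
    have l2 : Filter.Tendsto (fun m => ⟪g m, H0.op (H.op x)⟫) Filter.atTop
        (nhds ⟪y, H0.op (H.op x)⟫) := Filter.Tendsto.inner hgy tendsto_const_nhds
    exact tendsto_nhds_unique (by simpa only [heq] using l1) l2
  have lemB : ∀ x, x ∈ H0.dom → H0.op x ∈ H0.dom →
      H.op x ∈ H0.dom ∧ H0.op (H.op x) = H.op (H0.op x) := by
    intro x hx hH0x
    refine hsa0.2.2 (H.op x) (H.op (H0.op x)) ?_
    intro y hy
    obtain ⟨g, hg, hgy, _, hg0⟩ := approx y hy
    have heq : ∀ m, ⟪H0.op (g m), H.op x⟫ = ⟪g m, H.op (H0.op x)⟫ := by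
      intro m
      rw [← I1 (g m) (hg m) x hx]
      exact hsaH.2.1 (g m) (hDsub _ (hg m)) (H0.op x) hH0x
    have l1 : Filter.Tendsto (fun m => ⟪H0.op (g m), H.op x⟫) Filter.atTop
        (nhds ⟪H0.op y, H.op x⟫) := Filter.Tendsto.inner hg0 tendsto_const_nhds
    have l2 : Filter.Tendsto (fun m => ⟪g m, H.op (H0.op x)⟫) Filter.atTop
        (nhds ⟪y, H.op (H0.op x)⟫) := Filter.Tendsto.inner hgy tendsto_const_nhds
    exact tendsto_nhds_unique (by simpa only [heq] using l1) l2
  -- Step 4: mutual invariance and the inclusions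
  have invA : ∀ k : ℕ, ∀ x : 𝓗, (∀ n, x ∈ H.domPow n) → H0.op x ∈ H.domPow k := by
    intro k
    induction k with
    | zero => intro x _; trivial
    | succ k ih =>
      intro x hx
      obtain ⟨h1, h2⟩ := lemA x (hx 1).1 (hx 2).2.1
      exact ⟨h1, h2 ▸ ih (H.op x) (fun n => (hx (n + 1)).2)⟩
  have invB : ∀ k : ℕ, ∀ x ∈ H0.Dinf, H.op x ∈ H0.domPow k := by
    intro k
    induction k with
    | zero => intro x _; trivial
    | succ k ih =>
      intro x hx
      obtain ⟨h1, h2⟩ := lemB x (hDsub _ hx) (hDsub _ (hDinv _ hx))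
      exact ⟨h1, h2 ▸ ih (H0.op x) (hDinv _ hx)⟩
  have invB' : ∀ x ∈ H0.Dinf, H.op x ∈ H0.Dinf := by
    intro x hx
    rw [Op.Dinf, Set.mem_iInter]
    exact fun k => invB k x hx
  have incl1 : ∀ n : ℕ, ∀ x ∈ H0.Dinf, x ∈ H.domPow n := by
    intro n
    induction n with
    | zero => intro x _; trivial
    | succ n ih => exact fun x hx => ⟨hDsub _ hx, ih (H.op x) (invB' x hx)⟩
  have incl2 : ∀ n : ℕ, ∀ x : 𝓗, (∀ k, x ∈ H.domPow k) → x ∈ H0.domPow n := by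
    intro n
    induction n with
    | zero => intro x _; trivial
    | succ n ih => exact fun x hx => ⟨(hx 1).1, ih (H0.op x) (fun k => invA k x hx)⟩
  ext x
  rw [Op.Dinf, Op.Dinf, Set.mem_iInter, Set.mem_iInter]
  constructor
  · intro hx n
    exact incl1 n x (by rw [Op.Dinf, Set.mem_iInter]; exact hx)
  · intro hx n
    exact incl2 n x hx

end Paper
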